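/- Under Notation (*): suppose p' ∈ Ass(J(H')^s) but p' ∉ Ass(J(H')^{s+1}) for some s>0 (so J(H') fails persistence at p'). If additionally p' ∉ Ass(J(H̃)^s) and p'+(y) ∉ Ass(J(H)^{s+1} : y), then p'+(y) ∈ Ass(J(H)^s) ∖ Ass(J(H)^{s+1}); in particular J(H) fails the persistence property. -/

import Mathlib

open MvPolynomial

noncomputable section

/-- A finite simple hypergraph on a vertex set `V`: edges are nonempty subsets of `V`
forming an antichain (a clutter). -/
structure FinHypergraph (σ : Type*) where
  V : Finset σ
  E : Finset (Finset σ)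
  edge_sub : ∀ e ∈ E, e ⊆ V
  edge_nonempty : ∀ e ∈ E, e.Nonempty
  simple : ∀ e ∈ E, ∀ f ∈ E, e ⊆ f → e = f

/-- The prime ideal generated by the variables indexed by `e`. -/
def primeOf {σ : Type*} (K : Type*) [Field K] (e : Finset σ) : Ideal (MvPolynomial σ K) :=
  Ideal.span ((fun i => (X i : MvPolynomial σ K)) '' e)

/-- The cover ideal of a set of edges: the intersection of the edge primes. -/
def coverIdeal {σ : Type*} (K : Type*) [Field K] (E : Finset (Finset σ)) :
    Ideal (MvPolynomial σ K) :=
  ⨅ e ∈ E, primeOf K e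

/-- The squarefree monomial supported on `T`. -/
def xU {σ : Type*} (K : Type*) [Field K] (T : Finset σ) : MvPolynomial σ K :=
  ∏ i ∈ T, X i
/-- `T` is a vertex cover of the edge set `E`. -/
def IsCover {σ : Type*} (E : Finset (Finset σ)) (T : Finset σ) : Prop :=
  ∀ e ∈ E, ∃ v ∈ e, v ∈ T

/-- `T` is a minimal vertex cover of the edge set `E`. -/
def IsMinimalCover {σ : Type*} (E : Finset (Finset σ)) (T : Finset σ) : Prop :=
  IsCover E T ∧ ∀ T' ⊂ T, ¬ IsCover E T'

/-- `m` is a minimal monomial generator of the monomial ideal `I`: it lies in `I`, and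
every divisor of `m` lying in `I` is associated to `m`. -/
def IsMinMonGen {σ K : Type*} [Field K] (I : Ideal (MvPolynomial σ K))
    (m : MvPolynomial σ K) : Prop :=
  m ∈ I ∧ ∀ d : MvPolynomial σ K, d ∣ m → d ∈ I → Associated d m

/-- `(V', E')` is a shadow of the hypergraph `H`. -/
def IsShadow {σ : Type*} [DecidableEq σ] (H : FinHypergraph σ) (V' : Finset σ) (E' : Finset (Finset σ)) : Prop :=
  V' ⊆ H.V ∧ (∀ e ∈ E', e ⊆ V') ∧ (∀ e ∈ E', e.Nonempty) ∧
    (∀ e ∈ E', ∀ f ∈ E', e ⊆ f → e = f) ∧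
    E'.card = H.E.card ∧ ∀ e ∈ H.E, e ∩ V' ∈ E'

/-- The cover ideal of a hypergraph on vertex set `V'` (edges `E'`, subsets of `V'`),
as an ideal of the small polynomial ring `K[V']`. -/
def smallCover {σ : Type*} [DecidableEq σ] (K : Type*) [Field K] (V' : Finset σ)
    (E' : Finset (Finset σ)) : Ideal (MvPolynomial {x : σ // x ∈ V'} K) :=
  ⨅ e ∈ E', primeOf K (e.subtype (· ∈ V'))

/-- `(V', E')` is an odd cycle graph `C_{2n+1}` for some positive `n`. -/
def IsOddCycle {σ : Type*} [DecidableEq σ] (V' : Finset σ) (E' : Finset (Finset σ)) : Prop :=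
  ∃ n : ℕ, 0 < n ∧ ∃ f : Fin (2 * n + 1) → σ, Function.Injective f ∧
    V' = Finset.univ.image f ∧ E' = Finset.univ.image (fun i => ({f i, f (i + 1)} : Finset σ))

/- Notation (*): `H = (V, E)` is a hypergraph with `V = X ∪ {y}` where `X = V \ {y}`;
`y` belongs to exactly one edge `e_y ∈ E`; `e := e_y \ {y}`;
`H' = (X, (E \ {e_y}) ∪ {e})` is the shadow of `H` on `X`, with edge set
`insert (ey.erase y) (H.E.erase ey)`; `H̃ = H_X` is the induced subhypergraph on `X`,
with edge set `H.E.filter (· ⊆ H.V.erase y)`.  Cover ideals of `H'` and `H̃` are taken as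
(cone) ideals of the ambient ring `K[V] = MvPolynomial σ K`, generated by the same monomials
as the corresponding ideals of `K[X]`. -/


open Pointwise
set_option linter.unusedSectionVars false
set_option linter.unusedVariables false

namespace PersistAux

variable {σ : Type*}

abbrev Expo (σ : Type*) := σ →₀ ℕ

def UpClosed (C : Set (Expo σ)) : Prop := ∀ ⦃a b : Expo σ⦄, a ≤ b → a ∈ C → b ∈ C

def shift (C : Set (Expo σ)) (v : Expo σ) : Set (Expo σ) := {d | v + d ∈ C}

def nsum : ℕ → Set (Expo σ) → Set (Expo σ)
  | 0, _ => Set.univ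
  | n+1, C => C + nsum n C

def PG (G : Finset σ) : Set (Expo σ) := {d | ∃ i ∈ G, d i ≠ 0}

lemma mem_shift {C : Set (Expo σ)} {v d : Expo σ} : d ∈ shift C v ↔ v + d ∈ C := Iff.rfl

lemma shift_zero (C : Set (Expo σ)) : shift C 0 = C := by
  ext d; simp [shift]

lemma shift_shift (C : Set (Expo σ)) (v w : Expo σ) :
    shift (shift C v) w = shift C (v + w) := by
  ext d; simp [shift, add_assoc]

lemma upClosed_PG (G : Finset σ) : UpClosed (PG G) := by
  intro a b hab ⟨i, hi, hne⟩
  exact ⟨i, hi, by have := Finsupp.le_def.mp hab i; omega⟩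

lemma upClosed_univ : UpClosed (Set.univ : Set (Expo σ)) := fun _ _ _ _ => trivial

lemma upClosed_inter {C D : Set (Expo σ)} (hC : UpClosed C) (hD : UpClosed D) :
    UpClosed (C ∩ D) := fun _ _ hab ⟨h1, h2⟩ => ⟨hC hab h1, hD hab h2⟩

lemma upClosed_iInter {ι : Sort*} {C : ι → Set (Expo σ)} (h : ∀ i, UpClosed (C i)) :
    UpClosed (⋂ i, C i) := by
  intro a b hab ha
  simp only [Set.mem_iInter] at ha ⊢
  exact fun i => h i hab (ha i)

lemma upClosed_add {C D : Set (Expo σ)} (hC : UpClosed C) (hD : UpClosed D) :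
    UpClosed (C + D) := by
  rintro a b hab ⟨c, hc, d, hd, rfl⟩
  refine ⟨c, hc, b - c, hD ?_ hd, ?_⟩
  · have h1 := Finsupp.le_def.mp hab
    rw [Finsupp.le_def]
    intro i
    have := h1 i
    rw [Finsupp.add_apply] at this
    rw [Finsupp.tsub_apply]
    omega
  · ext i
    have := Finsupp.le_def.mp hab i
    rw [Finsupp.add_apply] at this ⊢
    rw [Finsupp.tsub_apply]
    omega

lemma upClosed_nsum {C : Set (Expo σ)} (hC : UpClosed C) (n : ℕ) : UpClosed (nsum n C) := by
  induction n with
  | zero => exact upClosed_univ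
  | succ n ih => exact upClosed_add hC ih

lemma upClosed_shift {C : Set (Expo σ)} (hC : UpClosed C) (v : Expo σ) :
    UpClosed (shift C v) := by
  intro a b hab ha
  exact hC (add_le_add_right hab v) ha

lemma univ_add {C : Set (Expo σ)} (hC : UpClosed C) : (Set.univ : Set (Expo σ)) + C = C := by
  ext d
  constructor
  · rintro ⟨a, -, c, hc, rfl⟩
    exact hC (le_add_self) hc
  · intro hd
    exact ⟨0, trivial, d, hd, by simp⟩

lemma add_univ {C : Set (Expo σ)} (hC : UpClosed C) : C + (Set.univ : Set (Expo σ)) = C := by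
  rw [add_comm]; exact univ_add hC

lemma nsum_one {C : Set (Expo σ)} (hC : UpClosed C) : nsum 1 C = C := by
  show C + Set.univ = C
  exact add_univ hC

lemma nsum_succ (n : ℕ) (C : Set (Expo σ)) : nsum (n+1) C = C + nsum n C := rfl

lemma nsum_mono {C D : Set (Expo σ)} (h : C ⊆ D) (n : ℕ) : nsum n C ⊆ nsum n D := by
  induction n with
  | zero => exact subset_rfl
  | succ n ih => exact Set.add_subset_add h ih

lemma nsum_add_nsum {C : Set (Expo σ)} (hC : UpClosed C) (m n : ℕ) :
    nsum m C + nsum n C = nsum (m + n) C := by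
  induction m with
  | zero => rw [Nat.zero_add]; exact univ_add (upClosed_nsum hC n)
  | succ m ih =>
      have h2 : nsum (m + 1 + n) C = nsum ((m + n) + 1) C := by rw [Nat.add_right_comm]
      rw [h2, nsum_succ, nsum_succ, add_assoc, ih]


/-- Splitting lemma for shifts of sums of upward closed sets. -/
lemma mem_shift_add {A B : Set (Expo σ)} {v d : Expo σ} :
    d ∈ shift (A + B) v ↔ ∃ v1 v2, v1 + v2 = v ∧ d ∈ shift A v1 + shift B v2 := by
  constructor
  · rintro h
    rw [mem_shift] at h
    obtain ⟨a, ha, b, hb, hab⟩ := h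
    have hco : ∀ i, v i + d i = a i + b i := by
      intro i
      have := DFunLike.congr_fun hab i
      simpa [Finsupp.add_apply] using this.symm
    refine ⟨v - (v - a), (v - a) ⊓ b, ?_, a - (v - (v - a)), ?_, b - ((v - a) ⊓ b), ?_, ?_⟩
    · ext i
      simp only [Finsupp.add_apply, Finsupp.tsub_apply, Finsupp.inf_apply]
      have := hco i; omega
    · rw [mem_shift]
      have : v - (v - a) + (a - (v - (v - a))) = a := by
        ext i
        simp only [Finsupp.add_apply, Finsupp.tsub_apply]
        have := hco i; omega
      rw [this]; exact ha
    · rw [mem_shift]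
      have : (v - a) ⊓ b + (b - ((v - a) ⊓ b)) = b := by
        ext i
        simp only [Finsupp.add_apply, Finsupp.tsub_apply, Finsupp.inf_apply]
        have := hco i; omega
      rw [this]; exact hb
    · ext i
      simp only [Finsupp.add_apply, Finsupp.tsub_apply, Finsupp.inf_apply]
      have := hco i; omega
  · rintro ⟨v1, v2, hv, x, hx, z, hz, rfl⟩
    rw [mem_shift] at hx hz ⊢
    have : v + (x + z) = (v1 + x) + (v2 + z) := by
      rw [← hv, add_add_add_comm]
    rw [this]
    exact Set.add_mem_add hx hz


variable [DecidableEq σ]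

lemma single_one_split {y : σ} {v1 v2 : Expo σ} (h : v1 + v2 = Finsupp.single y 1) :
    (v1 = 0 ∧ v2 = Finsupp.single y 1) ∨ (v1 = Finsupp.single y 1 ∧ v2 = 0) := by
  have hco : ∀ i, v1 i + v2 i = (Finsupp.single y 1 : Expo σ) i := by
    intro i
    have := DFunLike.congr_fun h i
    simpa [Finsupp.add_apply] using this
  have key : ∀ i, i ≠ y → v1 i = 0 ∧ v2 i = 0 := by
    intro i hi
    have h1 := hco i
    rw [Finsupp.single_apply, if_neg (fun h' => hi h'.symm)] at h1
    omega
  have hy := hco y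
  rw [Finsupp.single_eq_same] at hy
  by_cases hv : v1 y = 0
  · left
    constructor
    · ext i
      by_cases hiy : i = y
      · subst hiy; simpa using hv
      · simpa using (key i hiy).1
    · ext i
      by_cases hiy : i = y
      · subst hiy; rw [Finsupp.single_eq_same]; omega
      · rw [Finsupp.single_apply, if_neg (fun h' => hiy h'.symm)]; exact (key i hiy).2
  · right
    constructor
    · ext i
      by_cases hiy : i = y
      · subst hiy; rw [Finsupp.single_eq_same]; omega
      · rw [Finsupp.single_apply, if_neg (fun h' => hiy h'.symm)]; exact (key i hiy).1
    · ext i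
      by_cases hiy : i = y
      · subst hiy; simpa using by omega
      · simpa using (key i hiy).2

/-- Blindness w.r.t. the variable `y`. -/
def Blind (y : σ) (C : Set (Expo σ)) : Prop := ∀ d : Expo σ, d ∈ C ↔ d.erase y ∈ C

lemma blind_univ (y : σ) : Blind y (Set.univ : Set (Expo σ)) := fun _ => by simp

lemma blind_inter {y : σ} {C D : Set (Expo σ)} (hC : Blind y C) (hD : Blind y D) :
    Blind y (C ∩ D) := fun d => by
  rw [Set.mem_inter_iff, Set.mem_inter_iff, ← hC d, ← hD d]

lemma erase_eq_self_of_apply_eq_zero {y : σ} {a : Expo σ} (h : a y = 0) : a.erase y = a := by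
  ext i
  by_cases hiy : i = y
  · subst hiy; rw [Finsupp.erase_same, h]
  · rw [Finsupp.erase_ne hiy]

lemma blind_add {y : σ} {C D : Set (Expo σ)} (hC : Blind y C) (hD : Blind y D) :
    Blind y (C + D) := by
  intro d
  constructor
  · rintro ⟨a, ha, b, hb, rfl⟩
    rw [Finsupp.erase_add]
    exact Set.add_mem_add ((hC a).mp ha) ((hD b).mp hb)
  · rintro ⟨a, ha, b, hb, hab⟩
    have hay : a y = 0 := by
      have := DFunLike.congr_fun hab y
      simp only [Finsupp.add_apply, Finsupp.erase_same] at this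
      omega
    have hby : b y = 0 := by
      have := DFunLike.congr_fun hab y
      simp only [Finsupp.add_apply, Finsupp.erase_same] at this
      omega
    refine ⟨a + Finsupp.single y (d y), ?_, b, hb, ?_⟩
    · rw [hC]
      rw [Finsupp.erase_add, Finsupp.erase_single, add_zero,
        erase_eq_self_of_apply_eq_zero hay]
      exact ha
    · ext i
      by_cases hiy : i = y
      · subst hiy
        have := DFunLike.congr_fun hab i
        simp only [Finsupp.add_apply, Finsupp.erase_same, Finsupp.single_eq_same] at this ⊢
        omega
      · have := DFunLike.congr_fun hab i
        simp only [Finsupp.add_apply, Finsupp.erase_ne hiy,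
          Finsupp.single_eq_of_ne' (Ne.symm hiy)] at this ⊢
        omega

lemma blind_shift {y : σ} {C : Set (Expo σ)} (hC : Blind y C) {v : Expo σ} (hv : v y = 0) :
    Blind y (shift C v) := by
  intro d
  rw [mem_shift, mem_shift, hC (v + d), hC (v + d.erase y), Finsupp.erase_add,
    Finsupp.erase_add, erase_eq_self_of_apply_eq_zero hv]
  have : (d.erase y).erase y = d.erase y :=
    erase_eq_self_of_apply_eq_zero (Finsupp.erase_same)
  rw [this]

lemma blind_shift_single {y : σ} {C : Set (Expo σ)} (hC : Blind y C) (j : ℕ) :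
    shift C (Finsupp.single y j) = C := by
  ext d
  rw [mem_shift, hC (Finsupp.single y j + d), hC d, Finsupp.erase_add, Finsupp.erase_single,
    zero_add]


lemma upClosed_union {C D : Set (Expo σ)} (hC : UpClosed C) (hD : UpClosed D) :
    UpClosed (C ∪ D) := by
  rintro a b hab (h | h)
  · exact Or.inl (hC hab h)
  · exact Or.inr (hD hab h)

section CH

variable [DecidableEq σ]

/-- Exponents with positive `y`-coordinate. -/
def Ysupp (y : σ) : Set (Expo σ) := {d : Expo σ | d y ≠ 0}

/-- The exponent set of the cover ideal of `H`, in terms of that of `H̃` (`Ct`) and of the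
prime of `e_y \ y` (`Pe`). -/
def bigC (y : σ) (Ct Pe : Set (Expo σ)) : Set (Expo σ) := Ct ∩ (Pe ∪ Ysupp y)

variable {y : σ} {Ct Pe : Set (Expo σ)}

lemma upClosed_Ysupp (y : σ) : UpClosed (Ysupp y) := by
  intro a b hab ha
  have := Finsupp.le_def.mp hab y
  simp only [Ysupp, Set.mem_setOf_eq] at *
  omega

lemma upClosed_bigC (hut : UpClosed Ct) (hue : UpClosed Pe) : UpClosed (bigC y Ct Pe) :=
  upClosed_inter hut (upClosed_union hue (upClosed_Ysupp y))

lemma cp_subset_bigC : Ct ∩ Pe ⊆ bigC y Ct Pe := fun d ⟨h1, h2⟩ => ⟨h1, Or.inl h2⟩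

lemma bigC_subset : bigC y Ct Pe ⊆ Ct := Set.inter_subset_left

lemma mem_cp_of_yfree {d : Expo σ} (hd : d ∈ bigC y Ct Pe) (hy : d y = 0) : d ∈ Ct ∩ Pe := by
  rcases hd with ⟨h1, h2 | h2⟩
  · exact ⟨h1, h2⟩
  · exact absurd hy h2

lemma shift_bigC_single (hbt : Blind y Ct) :
    shift (bigC y Ct Pe) (Finsupp.single y 1) = Ct := by
  ext d
  rw [mem_shift]
  constructor
  · rintro ⟨h1, -⟩
    rw [hbt (Finsupp.single y 1 + d), Finsupp.erase_add, Finsupp.erase_single, zero_add,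
      ← hbt d] at h1
    exact h1
  · intro hd
    refine ⟨?_, Or.inr ?_⟩
    · rw [hbt (Finsupp.single y 1 + d), Finsupp.erase_add, Finsupp.erase_single, zero_add,
        ← hbt d]
      exact hd
    · have h5 : ((Finsupp.single y 1 : Expo σ) + d) y = 1 + d y := by
        rw [Finsupp.add_apply, Finsupp.single_eq_same]
      simp only [Ysupp, Set.mem_setOf_eq, h5]
      omega

lemma shift_add_single_y (A B : Set (Expo σ)) :
    shift (A + B) (Finsupp.single y 1) =
      (A + shift B (Finsupp.single y 1)) ∪ (shift A (Finsupp.single y 1) + B) := by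
  ext d
  rw [mem_shift_add]
  constructor
  · rintro ⟨v1, v2, hv, hd⟩
    rcases single_one_split hv with ⟨rfl, rfl⟩ | ⟨rfl, rfl⟩
    · rw [shift_zero] at hd; exact Or.inl hd
    · rw [shift_zero] at hd; exact Or.inr hd
  · rintro (hd | hd)
    · exact ⟨0, Finsupp.single y 1, by rw [zero_add], by rw [shift_zero]; exact hd⟩
    · exact ⟨Finsupp.single y 1, 0, by rw [add_zero], by rw [shift_zero]; exact hd⟩

lemma blind_nsum_Ct (hbt : Blind y Ct) (n : ℕ) : Blind y (nsum n Ct) := by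
  induction n with
  | zero => exact blind_univ y
  | succ n ih => exact blind_add hbt ih

lemma S1' (hut : UpClosed Ct) (hue : UpClosed Pe) (hbt : Blind y Ct) :
    ∀ s : ℕ, shift (nsum (s+1) (bigC y Ct Pe)) (Finsupp.single y 1)
      = Ct + nsum s (bigC y Ct Pe)
  | 0 => by
      rw [nsum_one (upClosed_bigC hut hue), shift_bigC_single hbt]
      show Ct = Ct + Set.univ
      rw [add_univ hut]
  | (s+1) => by
      rw [nsum_succ, shift_add_single_y, S1' hut hue hbt s, shift_bigC_single hbt]
      have h1 : bigC y Ct Pe + (Ct + nsum s (bigC y Ct Pe))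
          = Ct + nsum (s+1) (bigC y Ct Pe) := by
        rw [← add_assoc, add_comm (bigC y Ct Pe) Ct, add_assoc, ← nsum_succ]
      rw [h1, Set.union_self]

lemma S1a (hut : UpClosed Ct) (hue : UpClosed Pe) (hbt : Blind y Ct) :
    ∀ k s : ℕ, k ≤ s → shift (nsum s (bigC y Ct Pe)) (Finsupp.single y k)
      = nsum k Ct + nsum (s - k) (bigC y Ct Pe)
  | 0, s, _ => by
      rw [Finsupp.single_zero, shift_zero]
      show nsum s (bigC y Ct Pe) = Set.univ + nsum (s-0) (bigC y Ct Pe)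
      rw [univ_add (upClosed_nsum (upClosed_bigC hut hue) _), Nat.sub_zero]
  | (k+1), s, hk => by
      have hks : k ≤ s := by omega
      have hsk : s - k = (s - (k+1)) + 1 := by omega
      have : Finsupp.single y (k+1) = Finsupp.single y k + Finsupp.single y 1 := by
        rw [← Finsupp.single_add]
      rw [this, ← shift_shift, S1a hut hue hbt k s hks, shift_add_single_y,
        blind_shift_single (blind_nsum_Ct hbt k), hsk, S1' hut hue hbt]
      have h2 : nsum k Ct + (Ct + nsum (s - (k+1)) (bigC y Ct Pe))
          = nsum (k+1) Ct + nsum (s - (k+1)) (bigC y Ct Pe) := by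
        rw [← add_assoc, add_comm (nsum k Ct) Ct, ← nsum_succ]
      have h3 : nsum k Ct + nsum ((s - (k+1)) + 1) (bigC y Ct Pe)
          ⊆ nsum k Ct + (Ct + nsum (s - (k+1)) (bigC y Ct Pe)) := by
        apply Set.add_subset_add_left
        rw [nsum_succ]
        exact Set.add_subset_add_right bigC_subset
      rw [Set.union_eq_self_of_subset_right h3, h2]

lemma S1b (hut : UpClosed Ct) (hue : UpClosed Pe) (hbt : Blind y Ct)
    {k s : ℕ} (hk : s ≤ k) :
    shift (nsum s (bigC y Ct Pe)) (Finsupp.single y k) = nsum s Ct := by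
  have : Finsupp.single y k = Finsupp.single y s + Finsupp.single y (k - s) := by
    rw [← Finsupp.single_add]
    congr 1
    omega
  have hz : nsum 0 (bigC y Ct Pe) = (Set.univ : Set (Expo σ)) := rfl
  rw [this, ← shift_shift, S1a hut hue hbt s s le_rfl, Nat.sub_self, hz,
    add_univ (upClosed_nsum hut s), blind_shift_single (blind_nsum_Ct hbt s)]

lemma S3 : ∀ {t : ℕ} {d : Expo σ}, d ∈ nsum t (bigC y Ct Pe) → d y = 0 →
    d ∈ nsum t (Ct ∩ Pe)
  | 0, d, _, _ => trivial
  | (t+1), d, hd, hy => by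
      obtain ⟨a, ha, b, hb, rfl⟩ := hd
      have hab : a y = 0 ∧ b y = 0 := by
        rw [Finsupp.add_apply] at hy
        omega
      exact Set.add_mem_add (mem_cp_of_yfree ha hab.1) (S3 hb hab.2)

lemma yfree_mem_sum_iff {k j : ℕ} {x : Expo σ} (hx : x y = 0) :
    x ∈ nsum k Ct + nsum j (bigC y Ct Pe) ↔ x ∈ nsum k Ct + nsum j (Ct ∩ Pe) := by
  constructor
  · rintro ⟨c, hc, m, hm, rfl⟩
    rw [Finsupp.add_apply] at hx
    exact Set.add_mem_add hc (S3 hm (by omega))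
  · intro h
    exact Set.add_subset_add_left (nsum_mono cp_subset_bigC j) h

end CH


section IdealDict

variable (K : Type*) [Field K]

open MvPolynomial

/-- The monomial ideal with exponent set `C`. -/
def mI (C : Set (Expo σ)) : Ideal (MvPolynomial σ K) :=
  Ideal.span ((fun d => monomial d (1:K)) '' C)

variable {K}

lemma mem_mI {C : Set (Expo σ)} (hC : UpClosed C) {f : MvPolynomial σ K} :
    f ∈ mI K C ↔ ∀ a ∈ f.support, a ∈ C := by
  rw [mI, mem_ideal_span_monomial_image]
  exact forall₂_congr fun a _ => ⟨fun ⟨c, hc, hle⟩ => hC hle hc, fun h => ⟨a, h, le_rfl⟩⟩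

lemma monomial_mem_mI {C : Set (Expo σ)} (hC : UpClosed C) {d : Expo σ} :
    monomial d (1:K) ∈ mI K C ↔ d ∈ C := by
  classical
  rw [mem_mI hC, support_monomial]
  simp

lemma mI_mul (C D : Set (Expo σ)) : (mI K C) * (mI K D) = mI K (C + D) := by
  rw [mI, mI, mI, Ideal.span_mul_span']
  congr 1
  ext f
  constructor
  · rintro ⟨-, ⟨c, hc, rfl⟩, -, ⟨d, hd, rfl⟩, rfl⟩
    exact ⟨c + d, ⟨c, hc, d, hd, rfl⟩, by simp [monomial_mul]⟩
  · rintro ⟨-, ⟨c, hc, d, hd, rfl⟩, rfl⟩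
    exact ⟨monomial c 1, ⟨c, hc, rfl⟩, monomial d 1, ⟨d, hd, rfl⟩,
      by simp [monomial_mul]⟩

lemma mI_univ : mI K (Set.univ : Set (Expo σ)) = ⊤ := by
  rw [Ideal.eq_top_iff_one]
  have : (1 : MvPolynomial σ K) = monomial 0 1 := by simp
  rw [this]
  exact Ideal.subset_span ⟨0, trivial, rfl⟩

lemma mI_pow (C : Set (Expo σ)) (n : ℕ) : (mI K C) ^ n = mI K (nsum n C) := by
  induction n with
  | zero =>
      rw [pow_zero, Ideal.one_eq_top]
      exact mI_univ.symm
  | succ n ih => rw [pow_succ', ih, mI_mul]; rfl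

lemma colon_monomial {C : Set (Expo σ)} (hC : UpClosed C) (v : Expo σ) :
    (mI K C).colon (Ideal.span {(monomial v (1:K))}) = mI K (shift C v) := by
  ext r
  rw [Ideal.mem_colon_span_singleton, mem_mI hC, mem_mI (upClosed_shift hC v)]
  constructor
  · intro h a ha
    have hmem : a + v ∈ (r * monomial v (1:K)).support := by
      rw [mem_support_iff, coeff_mul_monomial', if_pos le_add_self, add_tsub_cancel_right,
        mul_one]
      exact mem_support_iff.mp ha
    have := h _ hmem
    rwa [add_comm] at this
  · intro h a ha
    rw [mem_support_iff, coeff_mul_monomial'] at ha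
    split_ifs at ha with hva
    · rw [mul_one] at ha
      have := h _ (mem_support_iff.mpr ha)
      rw [mem_shift, add_tsub_cancel_of_le hva] at this
      exact this
    · exact absurd rfl ha

lemma annihilator_mk_singleton {R : Type*} [CommRing R] (I : Ideal R) (x : R) :
    (Submodule.span R {(Ideal.Quotient.mk I x : R ⧸ I)}).annihilator
      = I.colon (Ideal.span {x}) := by
  ext r
  rw [Submodule.mem_annihilator_span_singleton, Ideal.mem_colon_span_singleton,
    Algebra.smul_def, Ideal.Quotient.algebraMap_eq, ← map_mul,
    Ideal.Quotient.eq_zero_iff_mem]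

lemma colon_bot_mk {R : Type*} [CommRing R] (I : Ideal R) (x r : R) :
    r ∈ (⊥ : Submodule R (R ⧸ I)).colon {Ideal.Quotient.mk I x} ↔ r * x ∈ I := by
  rw [Submodule.mem_colon_singleton, Submodule.mem_bot, Algebra.smul_def,
    Ideal.Quotient.algebraMap_eq, ← map_mul, Ideal.Quotient.eq_zero_iff_mem]

end IdealDict

section PrimeLayer
variable {K : Type*} [Field K]

lemma mem_primeOf {G : Finset σ} {f : MvPolynomial σ K} :
    f ∈ primeOf K G ↔ ∀ a ∈ f.support, ∃ i ∈ G, a i ≠ 0 := by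
  rw [primeOf]
  have : ((fun i => (X i : MvPolynomial σ K)) '' ↑G) = MvPolynomial.X '' (↑G : Set σ) := rfl
  rw [this, mem_ideal_span_X_image]
  simp

/-- The substitution killing the variables in `G`. -/
noncomputable def killG [DecidableEq σ] (K : Type*) [Field K] (G : Finset σ) :
    MvPolynomial σ K →ₐ[K] MvPolynomial σ K :=
  aeval (fun i => if i ∈ G then 0 else X i)

lemma killG_coeff [DecidableEq σ] (G : Finset σ) (f : MvPolynomial σ K) (a : σ →₀ ℕ)
    (ha : ∀ i ∈ G, a i = 0) : coeff a (killG K G f) = coeff a f := by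
  rw [killG, aeval_def, eval₂_eq]
  have hterm : ∀ d : σ →₀ ℕ,
      (algebraMap K (MvPolynomial σ K)) (coeff d f)
          * ∏ i ∈ d.support, (if i ∈ G then 0 else X i) ^ d i
        = if ∀ i ∈ G, d i = 0 then monomial d (coeff d f) else 0 := by
    intro d
    by_cases hd : ∀ i ∈ G, d i = 0
    · rw [if_pos hd]
      have : ∀ i ∈ d.support, (if i ∈ G then 0 else X i) ^ d i = (X i : MvPolynomial σ K) ^ d i := by
        intro i hi
        have : i ∉ G := fun hiG => (Finsupp.mem_support_iff.mp hi) (hd i hiG)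
        rw [if_neg this]
      rw [Finset.prod_congr rfl this, monomial_eq]
      rfl
    · push_neg at hd
      obtain ⟨i, hiG, hdi⟩ := hd
      have hi : i ∈ d.support := Finsupp.mem_support_iff.mpr hdi
      rw [if_neg (by push_neg; exact ⟨i, hiG, hdi⟩)]
      apply mul_eq_zero_of_right
      apply Finset.prod_eq_zero hi
      rw [if_pos hiG, zero_pow hdi]
  rw [Finset.sum_congr rfl (fun d _ => hterm d)]
  rw [coeff_sum]
  rw [Finset.sum_eq_single a]
  · rw [if_pos ha, coeff_monomial, if_pos rfl]
  · intro b _ hba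
    split_ifs with h
    · rw [coeff_monomial, if_neg hba]
    · rw [coeff_zero]
  · intro haf
    rw [MvPolynomial.notMem_support_iff] at haf
    rw [haf]
    split_ifs <;> simp

lemma primeOf_eq_ker [DecidableEq σ] (G : Finset σ) :
    primeOf K G = RingHom.ker (killG K G).toRingHom := by
  apply le_antisymm
  · rw [primeOf, Ideal.span_le]
    rintro - ⟨i, hi, rfl⟩
    have : killG K G (X i) = 0 := by
      rw [killG, aeval_X, if_pos (by exact_mod_cast hi)]
    rw [SetLike.mem_coe, RingHom.mem_ker]
    exact this
  · intro f hf
    rw [RingHom.mem_ker] at hf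
    by_contra hfP
    rw [mem_primeOf] at hfP
    push_neg at hfP
    obtain ⟨a, haf, ha⟩ := hfP
    have := killG_coeff G f a ha
    rw [show (killG K G).toRingHom f = killG K G f from rfl] at hf
    rw [hf, coeff_zero] at this
    exact (MvPolynomial.mem_support_iff.mp haf) this.symm

lemma primeOf_isPrime [DecidableEq σ] (G : Finset σ) : (primeOf K G).IsPrime := by
  rw [primeOf_eq_ker]
  exact RingHom.ker_isPrime _

lemma primeOf_insert [DecidableEq σ] (y : σ) (F : Finset σ) :
    primeOf K (insert y F) = primeOf K F ⊔ Ideal.span {(X y : MvPolynomial σ K)} := by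
  rw [primeOf, primeOf, Finset.coe_insert, Set.image_insert_eq, Ideal.span_insert, sup_comm]

end PrimeLayer


section AssLayer
variable {K : Type*} [Field K]

lemma primeOf_eq_mI (G : Finset σ) : primeOf K G = mI K (PG G) := by
  ext f
  rw [mem_primeOf, mem_mI (upClosed_PG G)]
  exact Iff.rfl

lemma isAss_of_shift_eq {C : Set (Expo σ)} (hC : UpClosed C) {G : Finset σ}
    (hG : (primeOf K G).IsPrime) {v : Expo σ} (hv : shift C v = PG G) :
    IsAssociatedPrime (primeOf K G) (MvPolynomial σ K ⧸ mI K C) := by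
  refine ⟨hG, Ideal.Quotient.mk _ (monomial v 1), ?_⟩
  have hc : (⊥ : Submodule (MvPolynomial σ K) (MvPolynomial σ K ⧸ mI K C)).colon
      {Ideal.Quotient.mk _ (monomial v 1)} = primeOf K G := by
    ext r
    rw [colon_bot_mk, ← Ideal.mem_colon_span_singleton, colon_monomial hC v, hv, primeOf_eq_mI]
  rw [hc, hG.radical]

def GoodW (C : Set (Expo σ)) (G : Finset σ) (S : Finset (Expo σ)) (w : Expo σ) : Prop :=
  ∀ u : Expo σ, (∀ i ∈ G, u i = 0) → ∃ a ∈ S, a + w + u ∉ C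

lemma shift_eq_of_isAss {C : Set (Expo σ)} (hC : UpClosed C) {G : Finset σ}
    (h : IsAssociatedPrime (primeOf K G) (MvPolynomial σ K ⧸ mI K C)) :
    ∃ v : Expo σ, shift C v = PG G := by
  classical
  obtain ⟨hG, x, hx⟩ := h
  obtain ⟨f, rfl⟩ := Ideal.Quotient.mk_surjective x
  have hcol : ∀ r : MvPolynomial σ K, r ∈ (⊥ : Submodule (MvPolynomial σ K)
      (MvPolynomial σ K ⧸ mI K C)).colon {Ideal.Quotient.mk (mI K C) f} ↔ r * f ∈ mI K C :=
    fun r => colon_bot_mk _ f r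
  have hmonf : ∀ u : Expo σ, monomial u (1:K) * f ∈ mI K C ↔ ∀ a ∈ f.support, u + a ∈ C := by
    intro u
    rw [mem_mI hC]
    constructor
    · intro h a ha
      apply h
      rw [mem_support_iff, coeff_monomial_mul, one_mul]
      exact mem_support_iff.mp ha
    · intro h c hc
      rw [mem_support_iff, coeff_monomial_mul'] at hc
      split_ifs at hc with huc
      · rw [one_mul] at hc
        have := h _ (mem_support_iff.mpr hc)
        rwa [add_tsub_cancel_of_le huc] at this
      · exact absurd rfl hc
  have hbound : ∃ N : ℕ, ∀ i ∈ G, ∀ a ∈ f.support, Finsupp.single i N + a ∈ C := by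
    have hn : ∀ i ∈ G, ∃ n : ℕ, ∀ a ∈ f.support, Finsupp.single i n + a ∈ C := by
      intro i hi
      have hXi : (X i : MvPolynomial σ K) ∈ primeOf K G := Ideal.subset_span ⟨i, hi, rfl⟩
      rw [hx] at hXi
      obtain ⟨n, hn⟩ := Ideal.mem_radical_iff.mp hXi
      refine ⟨n, (hmonf _).mp ?_⟩
      have := (hcol _).mp hn
      rwa [X_pow_eq_monomial] at this
    choose n hn using hn
    refine ⟨∑ i ∈ G.attach, n i.1 i.2, fun i hi a ha => hC ?_ (hn i hi a ha)⟩
    apply add_le_add ?_ le_rfl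
    rw [Finsupp.single_le_iff, Finsupp.single_eq_same]
    exact Finset.single_le_sum (f := fun j : {x // x ∈ G} => n j.1 j.2)
      (fun _ _ => Nat.zero_le _) (Finset.mem_attach _ ⟨i, hi⟩)
  obtain ⟨N, hN⟩ := hbound
  by_contra hno
  push_neg at hno
  have good0 : GoodW C G f.support 0 := by
    unfold GoodW
    intro u hu
    by_contra hcon
    push_neg at hcon
    have h1 : monomial u (1:K) * f ∈ mI K C := (hmonf u).mpr fun a ha => by
      have := hcon a ha
      rwa [add_zero, add_comm] at this
    have h2 : monomial u (1:K) ∈ primeOf K G := by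
      rw [hx]
      exact Ideal.le_radical ((hcol _).mpr h1)
    rw [mem_primeOf] at h2
    obtain ⟨i, hiG, hui⟩ := h2 u (by
      rw [support_monomial, if_neg one_ne_zero]; exact Finset.mem_singleton_self u)
    exact hui (hu i hiG)
  have goodlt : ∀ w, GoodW C G f.support w → ∀ i ∈ G, w i < N := by
    intro w hw i hi
    unfold GoodW at hw
    by_contra hlt
    push_neg at hlt
    obtain ⟨a, ha, hna⟩ := hw 0 (fun _ _ => Finsupp.zero_apply)
    apply hna
    apply hC _ (hN i hi a ha)
    rw [add_zero, add_comm (Finsupp.single i N) a]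
    apply add_le_add le_rfl
    rw [Finsupp.single_le_iff]; exact hlt
  have step : ∀ w, GoodW C G f.support w → ∃ i ∈ G, GoodW C G f.support (w + Finsupp.single i 1) := by
    intro w hw
    unfold GoodW at hw
    by_contra hst
    push_neg at hst
    have hst' : ∀ i ∈ G, ∃ u : Expo σ, (∀ j ∈ G, u j = 0) ∧
        ∀ a ∈ f.support, a + (w + Finsupp.single i 1) + u ∈ C := by
      intro i hi
      by_contra hc
      push_neg at hc
      exact hst i hi hc
    choose uu huu0 huuC using hst'
    set U : Expo σ := ∑ i ∈ G.attach, uu i.1 i.2 with hU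
    have hU0 : ∀ j ∈ G, U j = 0 := by
      intro j hj
      rw [hU, Finsupp.finset_sum_apply]
      exact Finset.sum_eq_zero fun i _ => huu0 i.1 i.2 j hj
    have hUle : ∀ i (hi : i ∈ G), uu i hi ≤ U := fun i hi =>
      Finset.single_le_sum (f := fun j : {x // x ∈ G} => uu j.1 j.2) (fun _ _ => zero_le)
        (Finset.mem_attach _ ⟨i, hi⟩)
    have hex : ∃ a ∈ f.support, ∀ u' : Expo σ, (∀ j ∈ G, u' j = 0) → a + w + U + u' ∉ C := by
      by_contra hc
      push_neg at hc
      choose u' hu'0 hu'C using hc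
      set U' : Expo σ := ∑ a ∈ f.support.attach, u' a.1 a.2 with hU'
      obtain ⟨a, ha, hna⟩ := hw (U + U') (fun j hj => by
        rw [Finsupp.add_apply, hU0 j hj, hU', Finsupp.finset_sum_apply, zero_add]
        exact Finset.sum_eq_zero fun b _ => hu'0 b.1 b.2 j hj)
      apply hna
      apply hC _ (hu'C a ha)
      rw [← add_assoc]
      apply add_le_add le_rfl
      exact Finset.single_le_sum (f := fun b : {x // x ∈ f.support} => u' b.1 b.2)
        (fun _ _ => zero_le) (Finset.mem_attach _ ⟨a, ha⟩)
    obtain ⟨a, ha, hav⟩ := hex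
    apply hno (a + w + U)
    ext d
    constructor
    · intro hd
      rw [mem_shift] at hd
      by_contra hdP
      exact hav d (fun j hj => by by_contra hne; exact hdP ⟨j, hj, hne⟩) hd
    · rintro ⟨i, hi, hdi⟩
      rw [mem_shift]
      apply hC _ (huuC i hi a ha)
      rw [Finsupp.le_def]
      intro j
      have h1 := Finsupp.le_def.mp (hUle i hi) j
      have h2 : (Finsupp.single i 1 : Expo σ) j ≤ d j := by
        rw [Finsupp.single_apply]
        split_ifs with h
        · subst h; omega
        · omega
      simp only [Finsupp.add_apply]
      omega
  have hind : ∀ k : ℕ, ∃ w, GoodW C G f.support w ∧ k ≤ ∑ i ∈ G, w i := by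
    intro k
    induction k with
    | zero => exact ⟨0, good0, Nat.zero_le _⟩
    | succ k ih =>
      obtain ⟨w, hw, hk⟩ := ih
      obtain ⟨i, hi, hwi⟩ := step w hw
      refine ⟨_, hwi, ?_⟩
      have : ∑ j ∈ G, (w + Finsupp.single i 1 : Expo σ) j = ∑ j ∈ G, w j + 1 := by
        simp [Finsupp.add_apply, Finset.sum_add_distrib, Finsupp.single_apply, hi]
      omega
  obtain ⟨w, hw, hk⟩ := hind (G.card * N + 1)
  have : ∑ i ∈ G, w i ≤ G.card * N := by
    calc ∑ i ∈ G, w i ≤ ∑ _i ∈ G, N := Finset.sum_le_sum fun i hi => (goodlt w hw i hi).le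
    _ = G.card * N := by rw [Finset.sum_const, smul_eq_mul]
  omega

end AssLayer


section DictLemmas
variable {K : Type*} [Field K]

lemma coverIdeal_eq_mI (E : Finset (Finset σ)) :
    coverIdeal K E = mI K (⋂ e ∈ E, PG e) := by
  have hup : UpClosed (⋂ e ∈ E, PG e) :=
    upClosed_iInter fun e => upClosed_iInter fun _ => upClosed_PG e
  ext g
  rw [coverIdeal, mem_mI hup]
  simp only [Ideal.mem_iInf, mem_primeOf, Set.mem_iInter]
  constructor
  · intro h a ha e he
    exact h e he a ha
  · intro h e he a ha
    exact h a ha e he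

end DictLemmas


section MainLemmas
variable [DecidableEq σ] {y : σ} {Ct Pe : Set (Expo σ)} {F : Finset σ}

lemma blind_iInter {ι : Sort*} {C : ι → Set (Expo σ)} (h : ∀ i, Blind y (C i)) :
    Blind y (⋂ i, C i) := by
  intro d
  simp only [Set.mem_iInter]
  exact forall_congr' fun i => h i d

lemma blind_PG_of_not_mem {G : Finset σ} (hy : y ∉ G) : Blind y (PG G) := by
  intro d
  constructor
  · rintro ⟨i, hi, hne⟩
    have hiy : i ≠ y := by rintro rfl; exact hy hi
    exact ⟨i, hi, by rwa [Finsupp.erase_ne hiy]⟩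
  · rintro ⟨i, hi, hne⟩
    have hiy : i ≠ y := by rintro rfl; exact hy hi
    refine ⟨i, hi, ?_⟩
    rwa [Finsupp.erase_ne hiy] at hne

lemma shift_erase {C : Set (Expo σ)} (hC : Blind y C) (v : Expo σ) :
    shift C (v.erase y) = shift C v := by
  ext d
  rw [mem_shift, mem_shift, hC (v.erase y + d), hC (v + d), Finsupp.erase_add,
    Finsupp.erase_add, erase_eq_self_of_apply_eq_zero (Finsupp.erase_same)]

lemma PG_insert (y : σ) (G : Finset σ) :
    PG (insert y G) = Ysupp y ∪ PG G := by
  ext d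
  constructor
  · rintro ⟨i, hi, hne⟩
    rcases Finset.mem_insert.mp hi with h | hiG
    · subst h; exact Or.inl hne
    · exact Or.inr ⟨i, hiG, hne⟩
  · rintro (h | ⟨i, hi, hne⟩)
    · exact ⟨y, Finset.mem_insert_self y G, h⟩
    · exact ⟨i, Finset.mem_insert_of_mem hi, hne⟩

lemma shift_eq_PG_of {S : Set (Expo σ)} (hS : UpClosed S) {u : Expo σ}
    (h1 : ∀ i ∈ F, u + Finsupp.single i 1 ∈ S)
    (h2 : ∀ d, u + d ∈ S → d ∈ PG F) :
    shift S u = PG F := by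
  ext d
  constructor
  · exact h2 d
  · rintro ⟨i, hi, hdi⟩
    have hle : Finsupp.single i 1 ≤ d := by
      rw [Finsupp.single_le_iff]
      omega
    exact hS (add_le_add_right hle u) (h1 i hi)

lemma single_mem_PG {i : σ} (hi : i ∈ F) : Finsupp.single i 1 ∈ PG F :=
  ⟨i, hi, by rw [Finsupp.single_eq_same]; omega⟩

lemma final_witness (hut : UpClosed Ct) (hue : UpClosed Pe) (hbt : Blind y Ct)
    {k s : ℕ} (hks : k < s) {u : Expo σ} (hu : u y = 0)
    (huI : u ∈ nsum (k+1) Ct + nsum (s-(k+1)) (Ct ∩ Pe))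
    (hcol : shift (nsum k Ct + nsum (s-k) (Ct ∩ Pe)) u = PG F) :
    shift (nsum s (bigC y Ct Pe)) (u + Finsupp.single y k) = PG (insert y F) := by
  have hupB : UpClosed (bigC y Ct Pe) := upClosed_bigC hut hue
  rw [add_comm u, ← shift_shift, S1a hut hue hbt k s (le_of_lt hks)]
  apply shift_eq_PG_of (upClosed_add (upClosed_nsum hut k) (upClosed_nsum hupB (s-k)))
  · intro i hi
    rcases Finset.mem_insert.mp hi with h | hiF
    · rw [h]
      obtain ⟨c, hc, m, hm, hcm⟩ := huI
      obtain ⟨c1, hc1, c2, hc2, hc12⟩ := hc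
      have hmem1 : c1 + Finsupp.single y 1 ∈ bigC y Ct Pe := by
        constructor
        · rw [hbt (c1 + Finsupp.single y 1), Finsupp.erase_add, Finsupp.erase_single,
            add_zero, ← hbt c1]
          exact hc1
        · right
          have h7 : ((c1 + Finsupp.single y 1 : Expo σ)) y = c1 y + 1 := by
            rw [Finsupp.add_apply, Finsupp.single_eq_same]
          simp only [Ysupp, Set.mem_setOf_eq, h7]
          omega
      have hmem2 : (c1 + Finsupp.single y 1) + m ∈ nsum (s-k) (bigC y Ct Pe) := by
        have hsk : s - k = (s - (k+1)) + 1 := by omega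
        rw [hsk, nsum_succ]
        exact Set.add_mem_add hmem1 (nsum_mono cp_subset_bigC _ hm)
      have hfin := Set.add_mem_add hc2 hmem2
      have heq : c2 + ((c1 + Finsupp.single y 1) + m) = u + Finsupp.single y 1 := by
        rw [← hcm, ← hc12]
        show c2 + ((c1 + Finsupp.single y 1) + m) = c1 + c2 + m + Finsupp.single y 1
        abel
      rwa [heq] at hfin
    · have hmm : Finsupp.single i 1 ∈ PG F := single_mem_PG hiF
      rw [← hcol] at hmm
      exact Set.add_subset_add_left (nsum_mono cp_subset_bigC _) hmm
  · intro d hd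
    by_contra hdP
    have hdy : d y = 0 := by
      by_contra h
      exact hdP ⟨y, Finset.mem_insert_self y F, h⟩
    have hdF : ∀ i ∈ F, d i = 0 := by
      intro i hi
      by_contra h
      exact hdP ⟨i, Finset.mem_insert_of_mem hi, h⟩
    have hud : (u + d) y = 0 := by rw [Finsupp.add_apply]; omega
    rw [yfree_mem_sum_iff hud] at hd
    have : d ∈ PG F := by rw [← hcol]; exact hd
    obtain ⟨i, hi, hne⟩ := this
    exact hne (hdF i hi)

lemma Ik_subset (hut : UpClosed Ct) {k s : ℕ} (hks : k < s) :
    nsum k Ct + nsum (s-k) (Ct ∩ Pe) ⊆ nsum (k+1) Ct + nsum (s-(k+1)) (Ct ∩ Pe) := by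
  rintro x ⟨c, hc, m, hm, rfl⟩
  have hsk : s - k = (s - (k+1)) + 1 := by omega
  rw [hsk, nsum_succ] at hm
  obtain ⟨m1, hm1, m2, hm2, rfl⟩ := hm
  have h1 : m1 + c ∈ nsum (k+1) Ct := Set.add_mem_add hm1.1 hc
  have h2 := Set.add_mem_add h1 hm2
  rwa [show m1 + c + m2 = c + (m1 + m2) by abel] at h2

lemma goal1_induction (hut : UpClosed Ct) (hue : UpClosed Pe) (hbt : Blind y Ct)
    (hbe : Blind y Pe) (hyF : y ∉ F) {s : ℕ}
    (h3 : ∀ v : Expo σ, shift (nsum s Ct) v ≠ PG F) :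
    ∀ t k, k + t = s → ∀ u : Expo σ, u y = 0 →
      shift (nsum k Ct + nsum (s-k) (Ct ∩ Pe)) u = PG F →
      ∃ w : Expo σ, shift (nsum s (bigC y Ct Pe)) w = PG (insert y F)
  | 0, k, hk, u, hu, hcol => by
      exfalso
      apply h3 u
      have hks : k = s := by omega
      subst hks
      rwa [Nat.sub_self, show nsum 0 (Ct ∩ Pe) = (Set.univ : Set (Expo σ)) from rfl,
        add_univ (upClosed_nsum hut k)] at hcol
  | (t+1), k, hk, u, hu, hcol => by
      have hks : k < s := by omega
      by_cases huI : u ∈ nsum (k+1) Ct + nsum (s-(k+1)) (Ct ∩ Pe)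
      · exact ⟨u + Finsupp.single y k, final_witness hut hue hbt hks hu huI hcol⟩
      · by_cases hcase : shift (nsum (k+1) Ct + nsum (s-(k+1)) (Ct ∩ Pe)) u = PG F
        · exact goal1_induction hut hue hbt hbe hyF h3 t (k+1) (by omega) u hu hcase
        · have hupI : UpClosed (nsum (k+1) Ct + nsum (s-(k+1)) (Ct ∩ Pe)) :=
            upClosed_add (upClosed_nsum hut _) (upClosed_nsum (upClosed_inter hut hue) _)
          have hsubPG : PG F ⊆ shift (nsum (k+1) Ct + nsum (s-(k+1)) (Ct ∩ Pe)) u := by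
            rintro d ⟨i, hi, hne⟩
            have hm : Finsupp.single i 1 ∈ PG F := single_mem_PG hi
            rw [← hcol] at hm
            have h1 := Ik_subset hut hks hm
            have hle : u + Finsupp.single i 1 ≤ u + d :=
              add_le_add_right (Finsupp.single_le_iff.mpr (by omega)) u
            exact hupI hle h1
          have hnsub : ¬ shift (nsum (k+1) Ct + nsum (s-(k+1)) (Ct ∩ Pe)) u ⊆ PG F :=
            fun hs' => hcase (subset_antisymm hs' hsubPG)
          rw [Set.not_subset] at hnsub
          obtain ⟨d0, hd01, hd02⟩ := hnsub
          have hblindI : Blind y (nsum (k+1) Ct + nsum (s-(k+1)) (Ct ∩ Pe)) :=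
            blind_add (blind_nsum_Ct hbt _) (blind_nsum_Ct (blind_inter hbt hbe) _)
          have hd1 : u + d0.erase y ∈ nsum (k+1) Ct + nsum (s-(k+1)) (Ct ∩ Pe) := by
            have h2 := (hblindI (u + d0)).mp hd01
            rwa [Finsupp.erase_add, erase_eq_self_of_apply_eq_zero hu] at h2
          have hd2 : d0.erase y ∉ PG F := by
            intro hdP
            apply hd02
            rw [(blind_PG_of_not_mem hyF) d0]
            exact hdP
          have hdF : ∀ i ∈ F, (d0.erase y) i = 0 := fun i hi => by
            by_contra h
            exact hd2 ⟨i, hi, h⟩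
          have hu' : (u + d0.erase y) y = 0 := by
            rw [Finsupp.add_apply, Finsupp.erase_same]
            omega
          have hcol' : shift (nsum k Ct + nsum (s-k) (Ct ∩ Pe)) (u + d0.erase y) = PG F := by
            apply shift_eq_PG_of
              (upClosed_add (upClosed_nsum hut k) (upClosed_nsum (upClosed_inter hut hue) (s-k)))
            · intro i hi
              have hm : Finsupp.single i 1 ∈ PG F := single_mem_PG hi
              rw [← hcol] at hm
              have hle : u + Finsupp.single i 1 ≤ u + d0.erase y + Finsupp.single i 1 := by
                rw [Finsupp.le_def]
                intro j
                simp only [Finsupp.add_apply]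
                omega
              exact (upClosed_add (upClosed_nsum hut k)
                (upClosed_nsum (upClosed_inter hut hue) (s-k))) hle hm
            · intro dd hdd
              have h6 : d0.erase y + dd ∈ shift (nsum k Ct + nsum (s-k) (Ct ∩ Pe)) u := by
                rw [mem_shift, ← add_assoc]
                exact hdd
              rw [hcol] at h6
              obtain ⟨i, hi, hne⟩ := h6
              refine ⟨i, hi, ?_⟩
              have := hdF i hi
              rw [Finsupp.add_apply] at hne
              omega
          exact ⟨u + d0.erase y + Finsupp.single y k,
            final_witness hut hue hbt hks hu' hd1 hcol'⟩

lemma shift_single_add_blind {A B : Set (Expo σ)} (hbA : Blind y A) (hupB : UpClosed B)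
    (j : ℕ) :
    shift (A + B) (Finsupp.single y j) = A + shift B (Finsupp.single y j) := by
  ext d
  constructor
  · intro h
    obtain ⟨v1, v2, hv, x1, hx1, x2, hx2, rfl⟩ := mem_shift_add.mp h
    have hco : ∀ i, v1 i + v2 i = (Finsupp.single y j : Expo σ) i := by
      intro i
      have := DFunLike.congr_fun hv i
      simpa [Finsupp.add_apply] using this
    have hv1 : v1 = Finsupp.single y (v1 y) := by
      ext i
      by_cases hiy : i = y
      · subst hiy; rw [Finsupp.single_eq_same]
      · have := hco i
        rw [Finsupp.single_apply, if_neg (fun h' => hiy h'.symm)] at this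
        rw [Finsupp.single_apply, if_neg (fun h' => hiy h'.symm)]
        omega
    have hx1' : x1 ∈ A := by
      rw [hv1, blind_shift_single hbA] at hx1
      exact hx1
    have hx2' : x2 ∈ shift B (Finsupp.single y j) := by
      rw [mem_shift] at hx2 ⊢
      apply hupB _ hx2
      rw [Finsupp.le_def]
      intro i
      have h1 := hco i
      rw [Finsupp.add_apply, Finsupp.add_apply]
      omega
    exact Set.add_mem_add hx1' hx2'
  · rintro ⟨x1, hx1, x2, hx2, rfl⟩
    rw [mem_shift]
    rw [mem_shift] at hx2
    have heq : Finsupp.single y j + (x1 + x2) = x1 + (Finsupp.single y j + x2) := by abel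
    rw [heq]
    exact Set.add_mem_add hx1 hx2

lemma goal2_k0 (hut : UpClosed Ct) (hue : UpClosed Pe) (hbt : Blind y Ct)
    (hbe : Blind y Pe) (hyF : y ∉ F) {v : Expo σ} (hv0 : v y = 0) {s : ℕ}
    (hv : shift (nsum (s+1) (bigC y Ct Pe)) v = PG (insert y F)) :
    shift (nsum (s+1) (Ct ∩ Pe)) v = PG F := by
  apply shift_eq_PG_of (upClosed_nsum (upClosed_inter hut hue) _)
  · intro i hi
    have hiy : i ≠ y := by rintro rfl; exact hyF hi
    have hm : Finsupp.single i 1 ∈ PG (insert y F) := single_mem_PG (Finset.mem_insert_of_mem hi)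
    rw [← hv] at hm
    apply S3 hm
    rw [Finsupp.add_apply, Finsupp.single_apply, if_neg hiy]
    omega
  · intro d hd
    have hblind : Blind y (nsum (s+1) (Ct ∩ Pe)) := blind_nsum_Ct (blind_inter hbt hbe) _
    have hd' : v + d.erase y ∈ nsum (s+1) (Ct ∩ Pe) := by
      have h2 := (hblind (v + d)).mp hd
      rwa [Finsupp.erase_add, erase_eq_self_of_apply_eq_zero hv0] at h2
    have hd2 : d.erase y ∈ PG (insert y F) := by
      rw [← hv]
      exact (nsum_mono cp_subset_bigC _) hd'
    obtain ⟨i, hi, hne⟩ := hd2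
    rcases Finset.mem_insert.mp hi with h | hiF
    · subst h
      exact absurd Finsupp.erase_same hne
    · have hiy : i ≠ y := by rintro rfl; exact hyF hiF
      refine ⟨i, hiF, ?_⟩
      rwa [Finsupp.erase_ne hiy] at hne

lemma goal2_casek (hut : UpClosed Ct) (hue : UpClosed Pe) (hbt : Blind y Ct)
    {v' : Expo σ} {k s : ℕ} (hk : 1 ≤ k)
    (hv : shift (nsum (s+1) (bigC y Ct Pe)) (v' + Finsupp.single y k) = PG (insert y F)) :
    shift (Ct + nsum s (bigC y Ct Pe)) (v' + Finsupp.single y (k-1)) = PG (insert y F) := by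
  have hupB : UpClosed (bigC y Ct Pe) := upClosed_bigC hut hue
  rw [add_comm v', ← shift_shift] at hv ⊢
  rw [shift_single_add_blind hbt (upClosed_nsum hupB s)]
  rcases le_or_gt k s with hks | hks
  · rw [S1a hut hue hbt k (s+1) (by omega)] at hv
    rw [S1a hut hue hbt (k-1) s (by omega)]
    have heq : Ct + (nsum (k-1) Ct + nsum (s-(k-1)) (bigC y Ct Pe))
        = nsum k Ct + nsum (s+1-k) (bigC y Ct Pe) := by
      rw [← add_assoc, ← nsum_succ]
      have h1 : k - 1 + 1 = k := by omega
      have h2 : s - (k-1) = s + 1 - k := by omega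
      rw [h1, h2]
    rw [heq]
    exact hv
  · rw [S1b hut hue hbt (show s + 1 ≤ k by omega)] at hv
    rw [S1b hut hue hbt (show s ≤ k - 1 by omega), ← nsum_succ]
    exact hv

end MainLemmas

end PersistAux

open PersistAux
/-- Under Notation (*): suppose `p' ∈ Ass(J(H')^s)` but
`p' ∉ Ass(J(H')^{s+1})` for some `s > 0`. If moreover `p' ∉ Ass(J(H̃)^s)` and
`p' + (y) ∉ Ass(J(H)^{s+1} : y)`, then `p' + (y) ∈ Ass(J(H)^s) ∖ Ass(J(H)^{s+1})`;
in particular `J(H)` fails the persistence property. -/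
theorem persistence_fails {σ K : Type*} [DecidableEq σ] [Field K]
    (H : FinHypergraph σ) (y : σ) (ey : Finset σ)
    (hyV : y ∈ H.V) (heyE : ey ∈ H.E) (hyey : y ∈ ey)
    (huniq : ∀ f ∈ H.E, y ∈ f → f = ey)
    (s : ℕ) (hs : 0 < s) (F : Finset σ) (hF : F ⊆ H.V.erase y)
    (h1 : IsAssociatedPrime (primeOf K F)
        (MvPolynomial σ K ⧸ (coverIdeal K (insert (ey.erase y) (H.E.erase ey))) ^ s))
    (h2 : ¬ IsAssociatedPrime (primeOf K F)
        (MvPolynomial σ K ⧸ (coverIdeal K (insert (ey.erase y) (H.E.erase ey))) ^ (s + 1)))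
    (h3 : ¬ IsAssociatedPrime (primeOf K F)
        (MvPolynomial σ K ⧸ (coverIdeal K (H.E.filter (fun f => f ⊆ H.V.erase y))) ^ s))
    (h4 : ¬ IsAssociatedPrime (primeOf K F ⊔ Ideal.span {(X y : MvPolynomial σ K)})
        (MvPolynomial σ K ⧸
          ((coverIdeal K H.E) ^ (s + 1)).colon (Ideal.span {(X y : MvPolynomial σ K)}))) :
    IsAssociatedPrime (primeOf K F ⊔ Ideal.span {(X y : MvPolynomial σ K)})
        (MvPolynomial σ K ⧸ (coverIdeal K H.E) ^ s) ∧
      ¬ IsAssociatedPrime (primeOf K F ⊔ Ideal.span {(X y : MvPolynomial σ K)})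
        (MvPolynomial σ K ⧸ (coverIdeal K H.E) ^ (s + 1)) := by
  classical
  have hynotF : y ∉ F := fun h => (Finset.mem_erase.mp (hF h)).1 rfl
  set Ct : Set (PersistAux.Expo σ) := ⋂ f ∈ H.E.erase ey, PersistAux.PG f with hCt
  set Pe : Set (PersistAux.Expo σ) := PersistAux.PG (ey.erase y) with hPe
  have hEy : ∀ f ∈ H.E.erase ey, y ∉ f := by
    intro f hf hyf
    rcases Finset.mem_erase.mp hf with ⟨hne, hfE⟩
    exact hne (huniq f hfE hyf)
  have hut : UpClosed Ct :=
    upClosed_iInter fun f => upClosed_iInter fun _ => upClosed_PG f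
  have hbt : Blind y Ct :=
    blind_iInter fun f => blind_iInter fun hf => blind_PG_of_not_mem (hEy f hf)
  have hue : UpClosed Pe := upClosed_PG _
  have hbe : Blind y Pe := blind_PG_of_not_mem (Finset.notMem_erase y ey)
  have hfil : H.E.filter (fun f => f ⊆ H.V.erase y) = H.E.erase ey := by
    ext f
    simp only [Finset.mem_filter, Finset.mem_erase]
    constructor
    · rintro ⟨hf, hsub⟩
      refine ⟨?_, hf⟩
      rintro rfl
      exact (Finset.mem_erase.mp (hsub hyey)).1 rfl
    · rintro ⟨hne, hf⟩
      refine ⟨hf, ?_⟩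
      intro x hx
      rw [Finset.mem_erase]
      refine ⟨?_, H.edge_sub f hf hx⟩
      rintro rfl
      exact hne (huniq f hf hx)
  have hcov_E : coverIdeal K H.E = PersistAux.mI K (bigC y Ct Pe) := by
    rw [coverIdeal_eq_mI]
    congr 1
    conv_lhs => rw [← Finset.insert_erase heyE]
    rw [Finset.set_biInter_insert]
    have h8 : PersistAux.PG ey = Pe ∪ PersistAux.Ysupp y := by
      conv_lhs => rw [← Finset.insert_erase hyey]
      rw [PG_insert, Set.union_comm, ← hPe]
    rw [h8, Set.inter_comm]
    rfl
  have hcov_E' : coverIdeal K (insert (ey.erase y) (H.E.erase ey))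
      = PersistAux.mI K (Ct ∩ Pe) := by
    rw [coverIdeal_eq_mI]
    congr 1
    rw [Finset.set_biInter_insert, Set.inter_comm, ← hPe, ← hCt]
  have hcov_til : coverIdeal K (H.E.filter (fun f => f ⊆ H.V.erase y))
      = PersistAux.mI K Ct := by
    rw [hfil, coverIdeal_eq_mI, ← hCt]
  have hprimeF : (primeOf K F).IsPrime := h1.1
  rw [hcov_E', PersistAux.mI_pow] at h1 h2
  rw [hcov_til, PersistAux.mI_pow] at h3
  obtain ⟨v0, hv0⟩ := shift_eq_of_isAss (upClosed_nsum (upClosed_inter hut hue) s) h1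
  have hw : shift (nsum s (Ct ∩ Pe)) (v0.erase y) = PG F := by
    rw [shift_erase (blind_nsum_Ct (blind_inter hbt hbe) s)]
    exact hv0
  have h3' : ∀ v : PersistAux.Expo σ, shift (nsum s Ct) v ≠ PG F := by
    intro v hv
    apply h3
    exact isAss_of_shift_eq (upClosed_nsum hut s) hprimeF hv
  have hI0 : shift (nsum 0 Ct + nsum (s - 0) (Ct ∩ Pe)) (v0.erase y) = PG F := by
    rw [show nsum 0 Ct = (Set.univ : Set (PersistAux.Expo σ)) from rfl,
      univ_add (upClosed_nsum (upClosed_inter hut hue) _), Nat.sub_zero]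
    exact hw
  obtain ⟨w, hwfin⟩ := goal1_induction hut hue hbt hbe hynotF h3' s 0 (by omega)
    (v0.erase y) Finsupp.erase_same hI0
  have goal1 : IsAssociatedPrime (primeOf K (insert y F))
      (MvPolynomial σ K ⧸ (coverIdeal K H.E) ^ s) := by
    rw [hcov_E, PersistAux.mI_pow]
    exact isAss_of_shift_eq (upClosed_nsum (upClosed_bigC hut hue) s)
      (primeOf_isPrime _) hwfin
  constructor
  · rw [← primeOf_insert]
    exact goal1
  · intro hass
    rw [← primeOf_insert] at hass
    rw [hcov_E, PersistAux.mI_pow] at hass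
    obtain ⟨v, hv⟩ := shift_eq_of_isAss (upClosed_nsum (upClosed_bigC hut hue) (s+1)) hass
    by_cases hk : v y = 0
    · have h9 := goal2_k0 hut hue hbt hbe hynotF hk hv
      exact h2 (isAss_of_shift_eq (upClosed_nsum (upClosed_inter hut hue) _) hprimeF h9)
    · have hk1 : 1 ≤ v y := by omega
      have hvsplit : v.erase y + Finsupp.single y (v y) = v := Finsupp.erase_add_single y v
      have hvv : shift (nsum (s+1) (bigC y Ct Pe)) (v.erase y + Finsupp.single y (v y))
          = PG (insert y F) := by
        rw [hvsplit]
        exact hv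
      have h5 := goal2_casek hut hue hbt hk1 hvv
      apply h4
      rw [← primeOf_insert]
      have hcolon : ((coverIdeal K H.E)^(s+1)).colon
            (Ideal.span {(X y : MvPolynomial σ K)})
          = PersistAux.mI K (Ct + nsum s (bigC y Ct Pe)) := by
        rw [hcov_E, PersistAux.mI_pow,
          show (X y : MvPolynomial σ K) = MvPolynomial.monomial (Finsupp.single y 1) 1 from rfl,
          colon_monomial (upClosed_nsum (upClosed_bigC hut hue) (s+1))]
        congr 1
        rw [S1a hut hue hbt 1 (s+1) (by omega), nsum_one hut]
        norm_num
      rw [hcolon]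
      exact isAss_of_shift_eq
        (upClosed_add hut (upClosed_nsum (upClosed_bigC hut hue) s)) (primeOf_isPrime _) h5
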